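/- Let n ∈ ℝ with n ≤ d − 1. Then there is a constant C > 0, independent of δ, such that for every 0 < δ ≤ 1/2, ∫_{Σ₀ ∩ (B₁ ∖ B_δ)} |x|^{−n} d_Σ x ≤ C·χ_{d,n+1}(δ), where χ_{d,n+1}(δ) = 1 if n + 1 ≠ d and χ_{d,n+1}(δ) = |ln δ| if n + 1 = d, and B_r denotes the closed ball of radius r centred at 0. -/

import Mathlib

open MeasureTheory Real Set
open scoped ENNReal NNReal

local notation "⟪" x ", " y "⟫" => @inner ℝ _ _ x y

lemma lemA (m : ℕ) (z₀ : EuclideanSpace ℝ (Fin m)) {ρ : ℝ} (hρ : 0 ≤ ρ) :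
    μH[(m:ℝ)] (Metric.closedBall z₀ ρ) ≤ ENNReal.ofReal ((2 * Real.sqrt m * ρ) ^ m) := by
  set e := WithLp.equiv 2 (Fin m → ℝ) with he
  have hanti : AntilipschitzWith ((Fintype.card (Fin m) : ℝ≥0) ^ ((1 / (2:ℝ≥0∞)).toReal)) e :=
    PiLp.antilipschitzWith_ofLp 2 _
  have hlip1 : LipschitzWith 1 e := PiLp.lipschitzWith_ofLp 2 _
  set K : ℝ≥0 := (m : ℝ≥0) ^ ((1:ℝ)/2) with hK
  have hlip : LipschitzWith K e.symm := by
    have := hanti.to_rightInverse (g := e.symm) (fun y => e.apply_symm_apply y)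
    convert this using 2
    simp [Fintype.card_fin]
    norm_num
  have hsub : Metric.closedBall z₀ ρ ⊆ e.symm '' (Metric.closedBall (e z₀) ρ) := by
    intro y hy
    exact ⟨e y, by simpa using (hlip1.dist_le_mul y z₀).trans (by simpa using hy), by simp⟩
  calc μH[(m:ℝ)] (Metric.closedBall z₀ ρ) ≤ μH[(m:ℝ)] (e.symm '' (Metric.closedBall (e z₀) ρ)) :=
        measure_mono hsub
    _ ≤ (K : ℝ≥0∞) ^ (m:ℝ) * μH[(m:ℝ)] (Metric.closedBall (e z₀) ρ) :=
        hlip.hausdorffMeasure_image_le (by positivity) _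
    _ = (K : ℝ≥0∞) ^ (m:ℝ) * ENNReal.ofReal ((2 * ρ) ^ m) := by
        rw [show (μH[(m:ℝ)] : Measure (Fin m → ℝ)) = volume by
          simpa [Fintype.card_fin] using (hausdorffMeasure_pi_real (ι := Fin m))]
        rw [Real.volume_pi_closedBall _ hρ, Fintype.card_fin]
    _ ≤ ENNReal.ofReal ((2 * Real.sqrt m * ρ) ^ m) := by
        have hcoe : ((K ^ (m:ℝ) : ℝ≥0) : ℝ) = Real.sqrt m ^ m := by
          rw [hK, ← NNReal.rpow_mul, NNReal.coe_rpow, NNReal.coe_natCast,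
            ← Real.rpow_natCast (Real.sqrt (m:ℝ)) m, Real.sqrt_eq_rpow,
            ← Real.rpow_mul (Nat.cast_nonneg m)]
        have h1 : ((K : ℝ≥0∞)) ^ (m:ℝ) = ENNReal.ofReal (Real.sqrt m ^ m) := by
          rw [← ENNReal.coe_rpow_of_nonneg _ (by positivity), ← hcoe, ENNReal.ofReal_coe_nnreal]
        rw [h1, ← ENNReal.ofReal_mul (by positivity)]
        apply ENNReal.ofReal_le_ofReal
        apply le_of_eq
        rw [mul_pow, mul_pow]; ring

set_option maxHeartbeats 1000000 in
lemma graphBound (d : ℕ) (hd : 2 ≤ d) (u x₀ : EuclideanSpace ℝ (Fin d)) (hu : ‖u‖ = 1)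
    {ρ : ℝ} (hρ : 0 ≤ ρ) (S : Set (EuclideanSpace ℝ (Fin d)))
    (hSb : S ⊆ Metric.closedBall x₀ ρ)
    (hhalf : ∀ x ∈ S, ∀ y ∈ S, |⟪u, x - y⟫| ≤ (1/2) * ‖x - y‖) :
    μH[(d:ℝ)-1] S ≤
      ENNReal.ofReal (2^(d-1) * (2 * Real.sqrt ((d-1:ℕ)) * ρ)^(d-1)) := by
  classical
    have hu0 : u ≠ 0 := by intro h; rw [h, norm_zero] at hu; norm_num at hu
  set Q : EuclideanSpace ℝ (Fin d) → EuclideanSpace ℝ (Fin d) := fun v => v - ⟪u, v⟫ • u with hQ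
  have hQsub : ∀ v w : EuclideanSpace ℝ (Fin d), Q v - Q w = Q (v - w) := by
    intro v w
    simp only [hQ, inner_sub_right, sub_smul]
    abel
  have hQinner : ∀ v : EuclideanSpace ℝ (Fin d), ⟪u, Q v⟫ = 0 := by
    intro v
    simp only [hQ, inner_sub_right, inner_smul_right, real_inner_self_eq_norm_sq]
    rw [hu]; ring
  have hDecomp : ∀ v : EuclideanSpace ℝ (Fin d), ‖v‖^2 = ‖Q v‖^2 + ⟪u, v⟫^2 := by
    intro v
    have hv : v = Q v + ⟪u, v⟫ • u := by simp [hQ]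
    calc ‖v‖^2 = ‖Q v + ⟪u, v⟫ • u‖^2 := by rw [← hv]
      _ = ‖Q v‖^2 + 2 * ⟪Q v, ⟪u, v⟫ • u⟫ + ‖⟪u, v⟫ • u‖^2 := norm_add_sq_real _ _
      _ = ‖Q v‖^2 + ⟪u, v⟫^2 := by
          have h0 : ⟪Q v, u⟫ = 0 := by rw [real_inner_comm]; exact hQinner v
          rw [real_inner_smul_right, h0, mul_zero, mul_zero, add_zero, norm_smul,
            Real.norm_eq_abs, mul_pow, sq_abs, hu, one_pow, mul_one]
  have hQnorm : ∀ v : EuclideanSpace ℝ (Fin d), ‖Q v‖ ≤ ‖v‖ := by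
    intro v
    have h := hDecomp v
    nlinarith [norm_nonneg (Q v), norm_nonneg v, sq_nonneg (⟪u, v⟫)]
  have hkey : ∀ x ∈ S, ∀ y ∈ S, ‖x - y‖ ≤ 2 * ‖Q x - Q y‖ := by
    intro x hx y hy
    have h1 := hhalf x hx y hy
    have h2 := hDecomp (x - y)
    rw [hQsub]
    have h3 : ⟪u, x - y⟫^2 ≤ (1/2 * ‖x - y‖)^2 := by
      rw [← sq_abs]
      exact pow_le_pow_left₀ (abs_nonneg _) h1 2
    have h4 : ‖x - y‖^2 ≤ (2 * ‖Q (x - y)‖)^2 := by nlinarith [norm_nonneg (Q (x - y))]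
    have h5 := Real.sqrt_le_sqrt h4
    rwa [Real.sqrt_sq (norm_nonneg _), Real.sqrt_sq (by positivity)] at h5
  set T := Q '' S with hT
  set f : EuclideanSpace ℝ (Fin d) → EuclideanSpace ℝ (Fin d) := Function.invFunOn Q S with hf
  have hfmem : ∀ a ∈ T, f a ∈ S ∧ Q (f a) = a := by
    intro a ha
    obtain ⟨x, hx, rfl⟩ := ha
    exact ⟨Function.invFunOn_mem ⟨x, hx, rfl⟩, Function.invFunOn_eq ⟨x, hx, rfl⟩⟩
  have hSsub : S ⊆ f '' T := by
    intro x hx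
    have haT : Q x ∈ T := ⟨x, hx, rfl⟩
    obtain ⟨hfx, hQfx⟩ := hfmem _ haT
    have : ‖f (Q x) - x‖ ≤ 2 * ‖Q (f (Q x)) - Q x‖ := hkey _ hfx _ hx
    rw [hQfx, sub_self, norm_zero, mul_zero] at this
    have hxx : f (Q x) = x := by
      have := le_antisymm this (norm_nonneg _)
      rwa [norm_sub_eq_zero_iff] at this
    exact ⟨Q x, haT, hxx⟩
  have hlipf : LipschitzOnWith 2 f T := by
    rw [lipschitzOnWith_iff_norm_sub_le]
    intro a ha b hb
    obtain ⟨hfa, hQa⟩ := hfmem a ha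
    obtain ⟨hfb, hQb⟩ := hfmem b hb
    have := hkey _ hfa _ hfb
    rw [hQa, hQb] at this
    simpa using this
  -- the orthogonal complement
  set K' : Submodule ℝ (EuclideanSpace ℝ (Fin d)) := (ℝ ∙ u)ᗮ with hK'
  have hQmem : ∀ v : EuclideanSpace ℝ (Fin d), Q v ∈ K' := by
    intro v
    rw [hK', Submodule.mem_orthogonal]
    intro w hw
    obtain ⟨c, rfl⟩ := Submodule.mem_span_singleton.1 hw
    rw [real_inner_smul_left, hQinner, mul_zero]
  set m := Module.finrank ℝ K' with hmdef
  have hm : (1 + m : ℕ) = d := by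
    have := Submodule.finrank_add_finrank_orthogonal (K := (ℝ ∙ u : Submodule ℝ (EuclideanSpace ℝ (Fin d))))
    rw [finrank_span_singleton hu0] at this
    simpa [hmdef, hK', finrank_euclideanSpace_fin] using this
  have hmd : m = d - 1 := by omega
  have hmr : (m : ℝ) = (d:ℝ) - 1 := by
    rw [hmd]
    push_cast [Nat.cast_sub (by omega : 1 ≤ d)]
    ring
  set b := stdOrthonormalBasis ℝ K'
  set j : EuclideanSpace ℝ (Fin m) → EuclideanSpace ℝ (Fin d) := fun z => ((b.repr.symm z : K') : EuclideanSpace ℝ (Fin d)) with hj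
  have hjiso : Isometry j := by
    have h1 : Isometry ((↑) : K' → EuclideanSpace ℝ (Fin d)) := isometry_subtype_coe
    exact h1.comp b.repr.symm.isometry
  have hz₀ : j (b.repr ⟨Q x₀, hQmem x₀⟩) = Q x₀ := by simp [hj]
  set z₀ := b.repr ⟨Q x₀, hQmem x₀⟩
  have hTj : T ⊆ j '' (j ⁻¹' T) := by
    intro a ha
    obtain ⟨x, hx, rfl⟩ := ha
    refine ⟨b.repr ⟨Q x, hQmem x⟩, ?_, by simp [hj]⟩
    show j _ ∈ T
    rw [show j (b.repr ⟨Q x, hQmem x⟩) = Q x by simp [hj]]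
    exact ⟨x, hx, rfl⟩
  have hpre : j ⁻¹' T ⊆ Metric.closedBall z₀ ρ := by
    intro w hw
    obtain ⟨x, hx, hQx⟩ := hw
    have : dist (j w) (j z₀) ≤ ρ := by
      rw [hz₀, ← hQx, dist_eq_norm, hQsub]
      exact (hQnorm _).trans (by simpa [Metric.mem_closedBall, dist_eq_norm] using hSb hx)
    rw [Metric.mem_closedBall, ← hjiso.dist_eq w z₀]
    exact this
  have hd1 : (0:ℝ) ≤ (d:ℝ) - 1 := by
    have : (1:ℝ) ≤ d := by exact_mod_cast Nat.one_le_of_lt hd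
    linarith
  calc μH[(d:ℝ)-1] S ≤ μH[(d:ℝ)-1] (f '' T) := measure_mono hSsub
    _ ≤ (2:ℝ≥0)^((d:ℝ)-1) * μH[(d:ℝ)-1] T := hlipf.hausdorffMeasure_image_le hd1
    _ ≤ (2:ℝ≥0)^((d:ℝ)-1) * μH[(d:ℝ)-1] (j '' (j ⁻¹' T)) :=
        mul_le_mul_right (measure_mono hTj) _
    _ = (2:ℝ≥0)^((d:ℝ)-1) * μH[(d:ℝ)-1] (j ⁻¹' T) := by
        rw [hjiso.hausdorffMeasure_image (Or.inl hd1)]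
    _ ≤ (2:ℝ≥0)^((d:ℝ)-1) * μH[(m:ℝ)] (Metric.closedBall z₀ ρ) := by
        rw [hmr]
        exact mul_le_mul_right (measure_mono hpre) _
    _ ≤ (2:ℝ≥0)^((d:ℝ)-1) * ENNReal.ofReal ((2 * Real.sqrt m * ρ) ^ m) :=
        mul_le_mul_right (lemA m z₀ hρ) _
    _ ≤ ENNReal.ofReal (2^(d-1) * (2 * Real.sqrt ((d-1:ℕ)) * ρ)^(d-1)) := by
        have h2 : ((2:ℝ≥0):ℝ≥0∞)^((d:ℝ)-1) = ENNReal.ofReal (2^m) := by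
          rw [← hmr, ENNReal.rpow_natCast, ENNReal.ofReal_pow (by norm_num)]
          norm_num
        rw [← hmd, h2, ← ENNReal.ofReal_mul (by positivity)]

lemma lemGrad (d : ℕ) (ω : EuclideanSpace ℝ (Fin d) → ℝ) (hω : ContDiff ℝ 4 ω) :
    ∃ L : ℝ, 1 ≤ L ∧ ∀ z ∈ Metric.closedBall (0:EuclideanSpace ℝ (Fin d)) 2,
      ∀ w ∈ Metric.closedBall (0:EuclideanSpace ℝ (Fin d)) 2,
      ‖gradient ω z - gradient ω w‖ ≤ L * ‖z - w‖ := by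
  have h1 : ContDiff ℝ 3 (fderiv ℝ ω) := hω.fderiv_right (by norm_num)
  have hg : ContDiff ℝ 2 (gradient ω) := by
    have : gradient ω = fun x =>
        (InnerProductSpace.toDual ℝ (EuclideanSpace ℝ (Fin d))).symm (fderiv ℝ ω x) := rfl
    rw [this]
    exact (InnerProductSpace.toDual ℝ (EuclideanSpace ℝ (Fin d))).symm.contDiff.comp
      (h1.of_le (by norm_num))
  have hc : Continuous (fderiv ℝ (gradient ω)) := hg.continuous_fderiv (by norm_num)
  obtain ⟨L₀, hL₀⟩ := (isCompact_closedBall (0:EuclideanSpace ℝ (Fin d)) 2).exists_bound_of_continuousOn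
    hc.continuousOn
  refine ⟨max L₀ 1, le_max_right _ _, fun z hz w hw => ?_⟩
  exact Convex.norm_image_sub_le_of_norm_fderiv_le
    (fun x _ => (hg.differentiable (by norm_num)) x)
    (fun x hx => (hL₀ x hx).trans (le_max_left _ _)) (convex_closedBall _ _) hw hz

lemma annulusBound (d : ℕ) (hd : 2 ≤ d) (ω : EuclideanSpace ℝ (Fin d) → ℝ)
    (hω : ContDiff ℝ 4 ω) (C_g : ℝ) (hCg : 0 < C_g)
    (hg2 : ∀ x : EuclideanSpace ℝ (Fin d), ω x = 0 → x ≠ 0 → ‖x‖ ≤ 1 →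
      C_g * ‖x‖ ≤ ‖gradient ω x‖) :
    ∃ A : ℝ, 0 < A ∧ ∀ r : ℝ, 0 < r → r ≤ 1 →
      μH[(d:ℝ)-1] ({x : EuclideanSpace ℝ (Fin d) | ω x = 0 ∧ x ≠ 0} ∩
        (Metric.closedBall 0 r \ Metric.closedBall 0 (r/2)))
      ≤ ENNReal.ofReal (A * r^(d-1)) := by
  classical
  obtain ⟨L, hL1, hLip⟩ := lemGrad d ω hω
  have hL0 : 0 < L := lt_of_lt_of_le one_pos hL1
  set ε : ℝ := min (C_g / (4*L)) 1 with hεdef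
  have hε0 : 0 < ε := lt_min (by positivity) one_pos
  have hε1 : ε ≤ 1 := min_le_right _ _
  have hεC : ε ≤ C_g / (4*L) := min_le_left _ _
  obtain ⟨t, ht⟩ := (isCompact_closedBall (0:EuclideanSpace ℝ (Fin d)) 1).elim_finite_subcover
    (fun y : EuclideanSpace ℝ (Fin d) => Metric.ball y (ε/2)) (fun y => Metric.isOpen_ball)
    (fun x hx => Set.mem_iUnion.2 ⟨x, Metric.mem_ball_self (by positivity)⟩)
  set B : ℝ := 2^(d-1) * (2 * Real.sqrt ((d-1:ℕ)))^(d-1) * ε^(d-1) with hBdef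
  have hB0 : 0 < B := by
    have : (0:ℝ) < Real.sqrt ((d-1:ℕ)) := by
      apply Real.sqrt_pos.2
      exact_mod_cast Nat.sub_pos_of_lt (by omega)
    positivity
  refine ⟨t.card * B + 1, by positivity, fun r hr0 hr1 => ?_⟩
  set Ar : Set (EuclideanSpace ℝ (Fin d)) := {x | ω x = 0 ∧ x ≠ 0} ∩
    (Metric.closedBall 0 r \ Metric.closedBall 0 (r/2)) with hArdef
  have hArball : ∀ x ∈ Ar, ‖x‖ ≤ r ∧ r/2 < ‖x‖ := by
    intro x hx
    obtain ⟨-, hx1, hx2⟩ := hx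
    constructor
    · simpa [Metric.mem_closedBall, dist_eq_norm] using hx1
    · by_contra h
      exact hx2 (by simpa [Metric.mem_closedBall, dist_eq_norm] using not_lt.1 h)
  have hArCover : Ar ⊆ ⋃ c ∈ t, Metric.ball (r • c) (ε*r/2) := by
    intro x hx
    have hxr : ‖x‖ ≤ r := (hArball x hx).1
    have hmem : r⁻¹ • x ∈ Metric.closedBall (0:EuclideanSpace ℝ (Fin d)) 1 := by
      rw [Metric.mem_closedBall, dist_zero_right, norm_smul, norm_inv, Real.norm_eq_abs,
        abs_of_pos hr0]
      rw [inv_mul_le_iff₀ hr0, mul_one]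
      exact hxr
    obtain ⟨c, hct, hc⟩ := Set.mem_iUnion₂.1 (ht hmem)
    refine Set.mem_iUnion₂.2 ⟨c, hct, ?_⟩
    rw [Metric.mem_ball, dist_eq_norm] at hc ⊢
    have : x - r • c = r • (r⁻¹ • x - c) := by
      rw [smul_sub, smul_smul, mul_inv_cancel₀ hr0.ne', one_smul]
    rw [this, norm_smul, Real.norm_eq_abs, abs_of_pos hr0]
    calc r * ‖r⁻¹ • x - c‖ < r * (ε/2) := by
          exact mul_lt_mul_of_pos_left hc hr0
      _ ≤ ε * r / 2 := by ring_nf; exact le_refl _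
  have hball : ∀ c ∈ t, μH[(d:ℝ)-1] (Ar ∩ Metric.ball (r • c) (ε*r/2)) ≤
      ENNReal.ofReal (2^(d-1) * (2 * Real.sqrt ((d-1:ℕ)) * (ε*r))^(d-1)) := by
    intro c hct
    rcases (Ar ∩ Metric.ball (r • c) (ε*r/2)).eq_empty_or_nonempty with hemp | ⟨x₀, hx₀⟩
    · rw [hemp, measure_empty]
      positivity
    · set Sset := Ar ∩ Metric.ball (r • c) (ε*r/2) with hSdef
      have hx₀Ar := hx₀.1
      obtain ⟨hω0, hx0ne⟩ := hx₀Ar.1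
      have hx₀n : ‖x₀‖ ≤ r ∧ r/2 < ‖x₀‖ := hArball x₀ hx₀.1
      set g₀ := gradient ω x₀ with hg₀def
      have hg₀ : C_g * (r/2) ≤ ‖g₀‖ := by
        calc C_g * (r/2) ≤ C_g * ‖x₀‖ := by
              apply mul_le_mul_of_nonneg_left (hx₀n.2.le) hCg.le
          _ ≤ ‖g₀‖ := hg2 x₀ hω0 hx0ne (hx₀n.1.trans hr1)
      have hg₀pos : 0 < ‖g₀‖ := lt_of_lt_of_le (by positivity) hg₀
      set u := ‖g₀‖⁻¹ • g₀ with hudef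
      have hu : ‖u‖ = 1 := by
        rw [hudef, norm_smul, norm_inv, norm_norm, inv_mul_cancel₀ hg₀pos.ne']
      have hSsub : Sset ⊆ Metric.closedBall x₀ (ε*r) := by
        intro x hx
        have h1 : dist x (r • c) < ε*r/2 := hx.2
        have h2 : dist x₀ (r • c) < ε*r/2 := hx₀.2
        rw [Metric.mem_closedBall]
        calc dist x x₀ ≤ dist x (r • c) + dist x₀ (r • c) := dist_triangle_right _ _ _
          _ ≤ ε*r/2 + ε*r/2 := by linarith
          _ = ε*r := by ring
      have hS2 : Metric.closedBall x₀ (ε*r) ⊆ Metric.closedBall (0:EuclideanSpace ℝ (Fin d)) 2 := by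
        intro z hz
        rw [Metric.mem_closedBall, dist_zero_right]
        have : dist z x₀ ≤ ε*r := hz
        have hzx : ‖z - x₀‖ ≤ ε*r := by rwa [dist_eq_norm] at this
        calc ‖z‖ = ‖(z - x₀) + x₀‖ := by rw [sub_add_cancel]
          _ ≤ ‖z - x₀‖ + ‖x₀‖ := norm_add_le _ _
          _ ≤ ε*r + r := by
              have := hx₀n.1
              linarith
          _ ≤ 2 := by nlinarith
      -- mean value estimate
      have hmvt : ∀ x ∈ Sset, ∀ y ∈ Sset, |⟪g₀, x - y⟫| ≤ L*(ε*r) * ‖x - y‖ := by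
        intro x hx y hy
        set φ : EuclideanSpace ℝ (Fin d) → ℝ := fun z => ω z - fderiv ℝ ω x₀ z with hφdef
        have hωdiff : Differentiable ℝ ω := hω.differentiable (by norm_num)
        have hφd : ∀ z, DifferentiableAt ℝ φ z := fun z =>
          ((hωdiff z).sub ((fderiv ℝ ω x₀).differentiableAt))
        have hφderiv : ∀ z, fderiv ℝ φ z = fderiv ℝ ω z - fderiv ℝ ω x₀ := by
          intro z
          rw [hφdef]
          rw [fderiv_fun_sub (hωdiff z) ((fderiv ℝ ω x₀).differentiableAt),
            ContinuousLinearMap.fderiv]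
        have hbound : ∀ z ∈ Metric.closedBall x₀ (ε*r), ‖fderiv ℝ φ z‖ ≤ L*(ε*r) := by
          intro z hz
          rw [hφderiv z]
          have heq : ‖fderiv ℝ ω z - fderiv ℝ ω x₀‖ = ‖gradient ω z - gradient ω x₀‖ := by
            rw [show gradient ω z - gradient ω x₀ =
              (InnerProductSpace.toDual ℝ (EuclideanSpace ℝ (Fin d))).symm
                (fderiv ℝ ω z - fderiv ℝ ω x₀) by
              rw [map_sub]; rfl]
            rw [LinearIsometryEquiv.norm_map]
          rw [heq]
          have hz2 : z ∈ Metric.closedBall (0:EuclideanSpace ℝ (Fin d)) 2 := hS2 hz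
          have hx₀2 : x₀ ∈ Metric.closedBall (0:EuclideanSpace ℝ (Fin d)) 2 := by
            rw [Metric.mem_closedBall, dist_zero_right]
            linarith [hx₀n.1]
          calc ‖gradient ω z - gradient ω x₀‖ ≤ L * ‖z - x₀‖ := hLip z hz2 x₀ hx₀2
            _ ≤ L*(ε*r) := by
                apply mul_le_mul_of_nonneg_left _ hL0.le
                rwa [Metric.mem_closedBall, dist_eq_norm] at hz
        have hmv := Convex.norm_image_sub_le_of_norm_fderiv_le (f := φ)
          (fun z _ => hφd z) hbound (convex_closedBall x₀ (ε*r)) (hSsub hy) (hSsub hx)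
        have hφeq : φ x - φ y = -(fderiv ℝ ω x₀ (x - y)) := by
          rw [hφdef]
          simp only
          rw [hx.1.1.1, hy.1.1.1, map_sub]
          ring
        have hinner : ⟪g₀, x - y⟫ = fderiv ℝ ω x₀ (x - y) := by
          rw [hg₀def]
          exact InnerProductSpace.toDual_symm_apply
        rw [hinner]
        calc |fderiv ℝ ω x₀ (x - y)| = ‖φ x - φ y‖ := by
              rw [hφeq]; rw [Real.norm_eq_abs, abs_neg]
          _ ≤ L*(ε*r) * ‖x - y‖ := hmv
      have hhalf : ∀ x ∈ Sset, ∀ y ∈ Sset, |⟪u, x - y⟫| ≤ (1/2) * ‖x - y‖ := by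
        intro x hx y hy
        rw [hudef, real_inner_smul_left, abs_mul, abs_inv, abs_norm]
        have h1 := hmvt x hx y hy
        have h2 : ‖g₀‖⁻¹ * |⟪g₀, x - y⟫| ≤ ‖g₀‖⁻¹ * (L*(ε*r) * ‖x - y‖) :=
          mul_le_mul_of_nonneg_left h1 (by positivity)
        refine h2.trans ?_
        have h3 : ‖g₀‖⁻¹ ≤ (C_g * (r/2))⁻¹ := by
          apply inv_anti₀ (by positivity) hg₀
        have h4 : ‖g₀‖⁻¹ * (L*(ε*r)) ≤ (C_g * (r/2))⁻¹ * (L*(ε*r)) := by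
          apply mul_le_mul_of_nonneg_right h3 (by positivity)
        have h5 : (C_g * (r/2))⁻¹ * (L*(ε*r)) ≤ 1/2 := by
          rw [inv_mul_le_iff₀ (by positivity)]
          have hεC' : ε * (4*L) ≤ C_g := by
            rwa [le_div_iff₀ (by positivity : (0:ℝ) < 4*L)] at hεC
          nlinarith
        calc ‖g₀‖⁻¹ * (L*(ε*r) * ‖x - y‖) = (‖g₀‖⁻¹ * (L*(ε*r))) * ‖x - y‖ := by ring
          _ ≤ (1/2) * ‖x - y‖ := by
              apply mul_le_mul_of_nonneg_right _ (norm_nonneg _)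
              exact h4.trans h5
      exact graphBound d hd u x₀ hu (by positivity) Sset hSsub hhalf
  calc μH[(d:ℝ)-1] Ar ≤ μH[(d:ℝ)-1] (⋃ c ∈ t, Ar ∩ Metric.ball (r • c) (ε*r/2)) := by
        apply measure_mono
        intro x hx
        obtain ⟨c, hct, hc⟩ := Set.mem_iUnion₂.1 (hArCover hx)
        exact Set.mem_iUnion₂.2 ⟨c, hct, hx, hc⟩
    _ ≤ ∑ c ∈ t, μH[(d:ℝ)-1] (Ar ∩ Metric.ball (r • c) (ε*r/2)) :=
        measure_biUnion_finset_le _ _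
    _ ≤ ∑ c ∈ t, ENNReal.ofReal (2^(d-1) * (2 * Real.sqrt ((d-1:ℕ)) * (ε*r))^(d-1)) :=
        Finset.sum_le_sum hball
    _ = (t.card : ℝ≥0∞) * ENNReal.ofReal (2^(d-1) * (2 * Real.sqrt ((d-1:ℕ)) * (ε*r))^(d-1)) := by
        rw [Finset.sum_const, nsmul_eq_mul]
    _ ≤ ENNReal.ofReal ((t.card * B + 1) * r^(d-1)) := by
        rw [← ENNReal.ofReal_natCast, ← ENNReal.ofReal_mul (by positivity)]
        apply ENNReal.ofReal_le_ofReal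
        have hexp : (t.card:ℝ) * (2^(d-1) * (2 * Real.sqrt ((d-1:ℕ)) * (ε*r))^(d-1)) =
            (t.card * B) * r^(d-1) := by
          rw [hBdef]; ring
        rw [hexp]
        have : (0:ℝ) ≤ r^(d-1) := by positivity
        nlinarith

lemma pow2inv (M : ℕ) : ((2:ℝ)⁻¹)^M = (2:ℝ)^(-(M:ℝ)) := by
  rw [← Real.rpow_natCast ((2:ℝ)⁻¹) M,
    show ((2:ℝ)⁻¹) = (2:ℝ)^(-1:ℝ) from (Real.rpow_neg_one 2).symm,
    ← Real.rpow_mul (by norm_num : (0:ℝ) ≤ 2)]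
  norm_num

/-- Lemma 2.6(1), first assertion: for `n ≤ d - 1` and `0 < δ ≤ 1/2`,
`∫_{Σ₀ ∩ (B₁ ∖ B_δ)} |x|^{-n} d_Σ x ≤ C·χ_{d,n+1}(δ)`. -/
theorem statement14
    (d : ℕ) (hd : 2 ≤ d)
    (M_ω m_ω : ℝ) (hm : m_ω ≤ M_ω - 1)
    (ω : EuclideanSpace ℝ (Fin d) → ℝ)
    (hω : ContDiff ℝ 4 ω)
    (C_ω : ℝ) (hCω : 0 < C_ω)
    (hωbd : ∀ i : ℕ, i ≤ 4 → ∀ x : EuclideanSpace ℝ (Fin d),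
      ‖iteratedFDeriv ℝ i ω x‖ ≤ C_ω * (max 1 ‖x‖) ^ (M_ω - (i : ℝ)))
    (h0Sigma : ω 0 = 0)
    (hcrit0 : gradient ω 0 = 0)
    (hhess : Function.Bijective (fderiv ℝ (gradient ω) 0))
    (hnocrit : ∀ x : EuclideanSpace ℝ (Fin d), ω x = 0 → x ≠ 0 → gradient ω x ≠ 0)
    (C_g : ℝ) (hCg : 0 < C_g)
    (hg1 : ∀ x : EuclideanSpace ℝ (Fin d), ω x = 0 → x ≠ 0 → 1 ≤ ‖x‖ →
      C_g * ‖x‖ ^ m_ω ≤ ‖gradient ω x‖)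
    (hg2 : ∀ x : EuclideanSpace ℝ (Fin d), ω x = 0 → x ≠ 0 → ‖x‖ ≤ 1 →
      C_g * ‖x‖ ≤ ‖gradient ω x‖)
    (n : ℝ) (hn : n ≤ d - 1) :
    ∃ C : ℝ, 0 < C ∧ ∀ δ : ℝ, 0 < δ → δ ≤ 1 / 2 →
      ∫⁻ x in {x : EuclideanSpace ℝ (Fin d) | ω x = 0 ∧ x ≠ 0} ∩
          (Metric.closedBall 0 1 \ Metric.closedBall 0 δ),
        ENNReal.ofReal (‖x‖ ^ (-n)) ∂(μH[(d : ℝ) - 1])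
      ≤ ENNReal.ofReal (C * (if n + 1 = (d : ℝ) then |Real.log δ| else 1)) := by
  classical
  obtain ⟨A, hA0, hann⟩ := annulusBound d hd ω hω C_g hCg hg2
  set Sig : Set (EuclideanSpace ℝ (Fin d)) := {x | ω x = 0 ∧ x ≠ 0} with hSig
  set μ : Measure (EuclideanSpace ℝ (Fin d)) := μH[(d:ℝ)-1] with hμ
  set p : ℝ := max n 0 with hp
  have hp0 : 0 ≤ p := le_max_right n 0
  have hd1 : (1:ℝ) ≤ (d:ℝ) - 1 := by
    have : (2:ℝ) ≤ (d:ℝ) := by exact_mod_cast hd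
    linarith
  have hpd : p ≤ (d:ℝ) - 1 := max_le hn (by linarith)
  set xg : ℝ := (2:ℝ)^(p - ((d:ℝ)-1)) with hxg
  have hxg0 : 0 ≤ xg := Real.rpow_nonneg (by norm_num) _
  -- the per-δ machinery, stated uniformly
  have main : ∀ δ : ℝ, 0 < δ → δ ≤ 1/2 →
      ∫⁻ x in Sig ∩ (Metric.closedBall 0 1 \ Metric.closedBall 0 δ),
        ENNReal.ofReal (‖x‖ ^ (-n)) ∂μ
      ≤ ∑' k : ℕ, ∫⁻ x in (Sig ∩ (Metric.closedBall 0 (((2:ℝ)⁻¹)^k) \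
          Metric.closedBall 0 ((((2:ℝ)⁻¹)^k)/2))) ∩
          (Metric.closedBall 0 1 \ Metric.closedBall 0 δ),
        ENNReal.ofReal (‖x‖ ^ (-n)) ∂μ := by
    intro δ hδ0 hδh
    set s : ℕ → Set (EuclideanSpace ℝ (Fin d)) := fun k =>
      (Sig ∩ (Metric.closedBall 0 (((2:ℝ)⁻¹)^k) \ Metric.closedBall 0 ((((2:ℝ)⁻¹)^k)/2))) ∩
        (Metric.closedBall 0 1 \ Metric.closedBall 0 δ) with hs
    have hcover : Sig ∩ (Metric.closedBall 0 1 \ Metric.closedBall 0 δ) ⊆ ⋃ k : ℕ, s k := by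
      intro x hx
      have hx1 : ‖x‖ ≤ 1 := by
        simpa [Metric.mem_closedBall, dist_eq_norm] using hx.2.1
      have hxδ : δ < ‖x‖ := by
        by_contra h
        exact hx.2.2 (by simpa [Metric.mem_closedBall, dist_eq_norm] using not_lt.1 h)
      have hx0 : 0 < ‖x‖ := lt_trans hδ0 hxδ
      have hex : ∃ j : ℕ, ((2:ℝ)⁻¹)^(j+1) < ‖x‖ := by
        obtain ⟨j, hj⟩ := exists_pow_lt_of_lt_one hx0 (by norm_num : (2:ℝ)⁻¹ < 1)
        exact ⟨j, lt_of_le_of_lt (pow_le_pow_of_le_one (by norm_num) (by norm_num)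
          (Nat.le_succ j)) hj⟩
      set k := Nat.find hex with hk
      have hk1 : ((2:ℝ)⁻¹)^(k+1) < ‖x‖ := Nat.find_spec hex
      have hk2 : ‖x‖ ≤ ((2:ℝ)⁻¹)^k := by
        rcases Nat.eq_zero_or_pos k with hk0 | hkpos
        · rw [hk0, pow_zero]; exact hx1
        · have := Nat.find_min hex (show k - 1 < k by omega)
          have hkk : k - 1 + 1 = k := by omega
          rw [hkk] at this
          exact not_lt.1 this
      refine Set.mem_iUnion.2 ⟨k, ⟨⟨hx.1, ?_, ?_⟩, hx.2⟩⟩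
      · simpa [Metric.mem_closedBall, dist_eq_norm] using hk2
      · intro hmem
        have : ‖x‖ ≤ ((2:ℝ)⁻¹)^k / 2 := by
          simpa [Metric.mem_closedBall, dist_eq_norm] using hmem
        have hps : ((2:ℝ)⁻¹)^k / 2 = ((2:ℝ)⁻¹)^(k+1) := by
          rw [pow_succ]; ring
        rw [hps] at this
        exact absurd hk1 (not_lt.2 this)
    calc ∫⁻ x in Sig ∩ (Metric.closedBall 0 1 \ Metric.closedBall 0 δ),
          ENNReal.ofReal (‖x‖ ^ (-n)) ∂μ
        ≤ ∫⁻ x in ⋃ k : ℕ, s k, ENNReal.ofReal (‖x‖ ^ (-n)) ∂μ :=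
          lintegral_mono_set hcover
      _ ≤ ∑' k : ℕ, ∫⁻ x in s k, ENNReal.ofReal (‖x‖ ^ (-n)) ∂μ :=
          lintegral_iUnion_le _ _
  -- per-term bound
  have hterm : ∀ δ : ℝ, 0 < δ → ∀ k : ℕ,
      (∫⁻ x in (Sig ∩ (Metric.closedBall 0 (((2:ℝ)⁻¹)^k) \
          Metric.closedBall 0 ((((2:ℝ)⁻¹)^k)/2))) ∩
          (Metric.closedBall 0 1 \ Metric.closedBall 0 δ),
        ENNReal.ofReal (‖x‖ ^ (-n)) ∂μ)
      ≤ ENNReal.ofReal (A * (2:ℝ)^p) * ENNReal.ofReal (xg^k) := by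
    intro δ hδ0 k
    set r : ℝ := ((2:ℝ)⁻¹)^k with hr
    have hr0 : (0:ℝ) < r := by positivity
    have hr1 : r ≤ 1 := pow_le_one₀ (by norm_num) (by norm_num)
    set sk := (Sig ∩ (Metric.closedBall 0 r \ Metric.closedBall 0 (r/2))) ∩
        (Metric.closedBall 0 1 \ Metric.closedBall 0 δ) with hsk
    have hbnd : ∀ x ∈ sk, ENNReal.ofReal (‖x‖ ^ (-n)) ≤
        ENNReal.ofReal ((2:ℝ)^(((k:ℝ)+1)*p)) := by
      intro x hx
      obtain ⟨⟨hxSig, hxr, hxr2⟩, hx1', hxδ'⟩ := hx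
      have hxu : ‖x‖ ≤ r := by simpa [Metric.mem_closedBall, dist_eq_norm] using hxr
      have hxl : r/2 < ‖x‖ := by
        by_contra h
        exact hxr2 (by simpa [Metric.mem_closedBall, dist_eq_norm] using not_lt.1 h)
      have hx1 : ‖x‖ ≤ 1 := by simpa [Metric.mem_closedBall, dist_eq_norm] using hx1'
      have hx0 : 0 < ‖x‖ := lt_trans (by positivity) hxl
      apply ENNReal.ofReal_le_ofReal
      have hr2 : r/2 = (2:ℝ)^(-((k:ℝ)+1)) := by
        rw [hr, show ((2:ℝ)⁻¹)^k/2 = ((2:ℝ)⁻¹)^(k+1) by rw [pow_succ]; ring, pow2inv]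
        push_cast
        norm_num
      rcases le_or_gt 0 n with hn0 | hn0
      · have hpn : p = n := max_eq_left hn0
        calc ‖x‖^(-n) ≤ (r/2)^(-n) :=
              Real.rpow_le_rpow_of_nonpos (by positivity) hxl.le (by linarith)
          _ = (2:ℝ)^(((k:ℝ)+1)*p) := by
              rw [hr2, ← Real.rpow_mul (by norm_num : (0:ℝ) ≤ 2), hpn]
              congr 1
              ring
      · have h1 : ‖x‖^(-n) ≤ 1 := Real.rpow_le_one (norm_nonneg _) hx1 (by linarith)
        refine h1.trans ?_
        calc (1:ℝ) = (2:ℝ)^(0:ℝ) := (Real.rpow_zero 2).symm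
          _ ≤ (2:ℝ)^(((k:ℝ)+1)*p) := Real.rpow_le_rpow_of_exponent_le (by norm_num)
              (by positivity)
    have hμsk : μ sk ≤ ENNReal.ofReal (A * r^(d-1)) := by
      refine le_trans (measure_mono Set.inter_subset_left) ?_
      exact hann r hr0 hr1
    calc ∫⁻ x in sk, ENNReal.ofReal (‖x‖ ^ (-n)) ∂μ
        ≤ ∫⁻ _ in sk, ENNReal.ofReal ((2:ℝ)^(((k:ℝ)+1)*p)) ∂μ :=
          setLIntegral_mono measurable_const hbnd
      _ = ENNReal.ofReal ((2:ℝ)^(((k:ℝ)+1)*p)) * μ sk := setLIntegral_const _ _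
      _ ≤ ENNReal.ofReal ((2:ℝ)^(((k:ℝ)+1)*p)) * ENNReal.ofReal (A * r^(d-1)) :=
          mul_le_mul_right hμsk _
      _ = ENNReal.ofReal (A * (2:ℝ)^p) * ENNReal.ofReal (xg^k) := by
          rw [← ENNReal.ofReal_mul (by positivity), ← ENNReal.ofReal_mul (by positivity)]
          congr 1
          have h2' : r^(d-1) = (2:ℝ)^(-((k:ℝ)*((d:ℝ)-1))) := by
            rw [hr, ← pow_mul, pow2inv]
            congr 1
            push_cast [Nat.cast_sub (by omega : 1 ≤ d)]
            ring
          have hx' : xg^k = (2:ℝ)^((k:ℝ)*(p - ((d:ℝ)-1))) := by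
            rw [hxg, ← Real.rpow_natCast ((2:ℝ)^(p - ((d:ℝ)-1))) k,
              ← Real.rpow_mul (by norm_num : (0:ℝ) ≤ 2)]
            congr 1
            ring
          rw [h2', hx',
            show ((k:ℝ)+1)*p = p + (k:ℝ)*p by ring,
            show (k:ℝ)*(p - ((d:ℝ)-1)) = (k:ℝ)*p + (-((k:ℝ)*((d:ℝ)-1))) by ring,
            Real.rpow_add (by norm_num : (0:ℝ) < 2),
            Real.rpow_add (by norm_num : (0:ℝ) < 2)]
          ring
  -- emptiness for large k
  have hempty : ∀ δ : ℝ, 0 < δ → ∀ k : ℕ, Real.logb 2 δ⁻¹ < (k:ℝ) →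
      (Sig ∩ (Metric.closedBall 0 (((2:ℝ)⁻¹)^k) \
          Metric.closedBall 0 ((((2:ℝ)⁻¹)^k)/2))) ∩
          (Metric.closedBall 0 1 \ Metric.closedBall 0 δ) = ∅ := by
    intro δ hδ0 k hklog
    have hδk : ((2:ℝ)⁻¹)^k < δ := by
      have h1 : δ⁻¹ < (2:ℝ)^(k:ℝ) :=
        (Real.logb_lt_iff_lt_rpow (by norm_num) (by positivity)).1 hklog
      rw [Real.rpow_natCast] at h1
      rw [inv_pow, inv_lt_comm₀ (by positivity) hδ0]
      exact h1
    ext x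
    simp only [Set.mem_inter_iff, Set.mem_empty_iff_false, iff_false]
    rintro ⟨⟨-, hxr, -⟩, -, hxδ⟩
    have hxu : ‖x‖ ≤ ((2:ℝ)⁻¹)^k := by
      simpa [Metric.mem_closedBall, dist_eq_norm] using hxr
    have hxδ' : δ < ‖x‖ := by
      by_contra h
      exact hxδ (by simpa [Metric.mem_closedBall, dist_eq_norm] using not_lt.1 h)
    linarith
  by_cases hcase : n + 1 = (d:ℝ)
  · -- n = d - 1, logarithmic bound
    have hnd : n = (d:ℝ) - 1 := by linarith
    have hpn : p = n := max_eq_left (by linarith)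
    have hxg1 : xg = 1 := by
      rw [hxg, hpn, hnd]
      simp
    refine ⟨A * (2:ℝ)^p * (2 / Real.log 2), by positivity, ?_⟩
    intro δ hδ0 hδh
    rw [if_pos hcase]
    set K : ℕ := ⌊Real.logb 2 δ⁻¹⌋₊ + 1 with hK
    have hlogb0 : 0 ≤ Real.logb 2 δ⁻¹ := by
      apply Real.logb_nonneg (by norm_num)
      rw [le_inv_comm₀ (by norm_num) hδ0]
      linarith
    have hKlt : ∀ k : ℕ, K ≤ k → Real.logb 2 δ⁻¹ < (k:ℝ) := by
      intro k hk
      calc Real.logb 2 δ⁻¹ < (⌊Real.logb 2 δ⁻¹⌋₊ + 1 : ℕ) := by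
            push_cast
            exact Nat.lt_floor_add_one _
        _ ≤ (k:ℝ) := by exact_mod_cast hk
    refine le_trans (main δ hδ0 hδh) ?_
    have hsum : ∀ k : ℕ, (∫⁻ x in (Sig ∩ (Metric.closedBall 0 (((2:ℝ)⁻¹)^k) \
          Metric.closedBall 0 ((((2:ℝ)⁻¹)^k)/2))) ∩
          (Metric.closedBall 0 1 \ Metric.closedBall 0 δ),
        ENNReal.ofReal (‖x‖ ^ (-n)) ∂μ)
        ≤ if k < K then ENNReal.ofReal (A * (2:ℝ)^p) else 0 := by
      intro k
      by_cases hkK : k < K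
      · rw [if_pos hkK]
        refine le_trans (hterm δ hδ0 k) ?_
        rw [hxg1, one_pow, ENNReal.ofReal_one, mul_one]
      · rw [if_neg hkK, hempty δ hδ0 k (hKlt k (not_lt.1 hkK))]
        simp
    refine le_trans (ENNReal.tsum_le_tsum hsum) ?_
    rw [tsum_eq_sum (s := Finset.range K)
      (fun b hb => if_neg (by simpa using hb))]
    rw [Finset.sum_congr rfl (fun b hb => if_pos (Finset.mem_range.1 hb)),
      Finset.sum_const, nsmul_eq_mul, Finset.card_range]
    rw [← ENNReal.ofReal_natCast, ← ENNReal.ofReal_mul (by positivity)]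
    apply ENNReal.ofReal_le_ofReal
    -- real inequality: K * (A * 2^p) ≤ A * 2^p * (2/log 2) * |log δ|
    have hlog2 : (0:ℝ) < Real.log 2 := Real.log_pos (by norm_num)
    have hlogδ : Real.log δ < 0 := Real.log_neg hδ0 (by linarith)
    have habs : |Real.log δ| = -Real.log δ := abs_of_neg hlogδ
    have hlogble : Real.logb 2 δ⁻¹ = -Real.log δ / Real.log 2 := by
      rw [Real.logb, Real.log_inv]
    have hge : Real.log 2 ≤ -Real.log δ := by
      have := Real.log_le_log hδ0 hδh
      rw [show (1:ℝ)/2 = 2⁻¹ by norm_num, Real.log_inv] at this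
      linarith
    have hKle : (K:ℝ) ≤ 2 / Real.log 2 * |Real.log δ| := by
      rw [hK]
      push_cast
      rw [habs, show 2 / Real.log 2 * -Real.log δ = 2 * Real.logb 2 δ⁻¹ by rw [hlogble]; ring]
      have h1 : (⌊Real.logb 2 δ⁻¹⌋₊ : ℝ) ≤ Real.logb 2 δ⁻¹ := Nat.floor_le hlogb0
      have h2 : (1:ℝ) ≤ Real.logb 2 δ⁻¹ := by
        rw [hlogble, le_div_iff₀ hlog2]
        linarith
      linarith
    calc (K:ℝ) * (A * (2:ℝ)^p) ≤ (2 / Real.log 2 * |Real.log δ|) * (A * (2:ℝ)^p) := by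
          apply mul_le_mul_of_nonneg_right hKle (by positivity)
      _ = A * (2:ℝ)^p * (2 / Real.log 2) * |Real.log δ| := by ring
  · -- n < d - 1, geometric series
    have hnd : n ≠ (d:ℝ) - 1 := fun h => hcase (by linarith)
    have hplt : p < (d:ℝ) - 1 := by
      rcases lt_or_eq_of_le hn with h | h
      · exact max_lt h (by linarith)
      · exact absurd h hnd
    have hxglt : xg < 1 := by
      rw [hxg]
      exact Real.rpow_lt_one_of_one_lt_of_neg (by norm_num) (by linarith)
    set xn : ℝ≥0 := xg.toNNReal with hxn
    have hxnlt : (xn : ℝ≥0∞) < 1 := by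
      rw [hxn]
      exact_mod_cast Real.toNNReal_lt_one.2 hxglt
    set V : ℝ≥0∞ := ENNReal.ofReal (A * (2:ℝ)^p) * (1 - (xn:ℝ≥0∞))⁻¹ with hV
    have hVne : V ≠ ⊤ := by
      apply ENNReal.mul_ne_top ENNReal.ofReal_ne_top
      rw [ENNReal.inv_ne_top]
      exact (tsub_pos_of_lt hxnlt).ne'
    refine ⟨V.toReal + 1, by positivity, ?_⟩
    intro δ hδ0 hδh
    rw [if_neg hcase, mul_one]
    refine le_trans (main δ hδ0 hδh) ?_
    refine le_trans (ENNReal.tsum_le_tsum (hterm δ hδ0)) ?_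
    rw [ENNReal.tsum_mul_left]
    have hgeom : ∑' k : ℕ, ENNReal.ofReal (xg^k) = (1 - (xn:ℝ≥0∞))⁻¹ := by
      have heq : ∀ k : ℕ, ENNReal.ofReal (xg^k) = ((xn:ℝ≥0∞))^k := by
        intro k
        rw [ENNReal.ofReal, Real.toNNReal_pow hxg0, ENNReal.coe_pow, hxn]
      rw [tsum_congr heq, ENNReal.tsum_geometric]
    rw [hgeom, ← hV]
    calc V = ENNReal.ofReal V.toReal := (ENNReal.ofReal_toReal hVne).symm
      _ ≤ ENNReal.ofReal (V.toReal + 1) := ENNReal.ofReal_le_ofReal (by linarith)
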